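/- Let S = { x ∈ [0,1]^J : max_j φ(a_j,x_j) = b } be nonempty. With X̄ the maximum solution and X(j) the minimal solution concentrated at j ∈ J' (as defined via the WPM inverse ((b^p - w·a_j^p)/(1-w))^(1/p)), one has S = ⋃_{j ∈ J'} [X(j), X̄], where [u,v] denotes the componentwise order interval { x : u ≤ x ≤ v }. -/

import Mathlib

open scoped Classical

noncomputable def phi (w p a x : ℝ) : ℝ := (w * a ^ p + (1 - w) * x ^ p) ^ (1 / p)

theorem stmt9 {J : Type*} [Fintype J] [Nonempty J] (w p : ℝ)
    (hw : w ∈ Set.Ioo (0:ℝ) 1) (hp : 0 < p)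
    (a : J → ℝ) (ha : ∀ j, a j ∈ Set.Icc (0:ℝ) 1) (b : ℝ) (hb : b ∈ Set.Icc (0:ℝ) 1)
    (hA : ∀ j, a j ≤ b / w ^ (1 / p))
    (S : Set (J → ℝ))
    (hS : S = {x : J → ℝ | (∀ j, x j ∈ Set.Icc (0:ℝ) 1) ∧
        Finset.univ.sup' Finset.univ_nonempty (fun j => phi w p (a j) (x j)) = b})
    (hne : S.Nonempty)
    (Xbar : J → ℝ)
    (hXbar : ∀ j, Xbar j =
      if b ^ p < 1 - w ∨ ((b ^ p + w - 1) / w) ^ (1 / p) ≤ a j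
      then ((b ^ p - w * (a j) ^ p) / (1 - w)) ^ (1 / p) else 1) :
    S = ⋃ j ∈ {j : J | b ^ p < 1 - w ∨ ((b ^ p + w - 1) / w) ^ (1 / p) ≤ a j},
          Set.Icc (fun k => if k = j then Xbar j else 0) Xbar := by
  obtain ⟨hw0, hw1⟩ := hw
  obtain ⟨hb0, hb1⟩ := hb
  have hw1' : (0:ℝ) < 1 - w := by linarith
  have hp0 : p ≠ 0 := ne_of_gt hp
  have hip : (0:ℝ) < 1 / p := by positivity
  set P : J → Prop := fun j => b ^ p < 1 - w ∨ ((b ^ p + w - 1) / w) ^ (1 / p) ≤ a j with hPdef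
  set c : J → ℝ := fun j => (b ^ p - w * a j ^ p) / (1 - w) with hcdef
  set X0 : J → ℝ := fun j => c j ^ (1 / p) with hX0def
  -- w * a j ^ p ≤ b ^ p
  have h1 : ∀ j, w * a j ^ p ≤ b ^ p := by
    intro j
    have hwp : (0:ℝ) < w ^ (1 / p) := Real.rpow_pos_of_pos hw0 _
    have h2 : a j * w ^ (1 / p) ≤ b := (le_div_iff₀ hwp).mp (hA j)
    have h3 : (a j * w ^ (1 / p)) ^ p ≤ b ^ p :=
      Real.rpow_le_rpow (mul_nonneg (ha j).1 hwp.le) h2 hp.le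
    rwa [Real.mul_rpow (ha j).1 hwp.le, one_div, Real.rpow_inv_rpow hw0.le hp0,
      mul_comm] at h3
  have hcnn : ∀ j, (0:ℝ) ≤ c j := fun j => div_nonneg (by linarith [h1 j]) hw1'.le
  have hX0nn : ∀ j, (0:ℝ) ≤ X0 j := fun j => Real.rpow_nonneg (hcnn j) _
  have hX0p : ∀ j, X0 j ^ p = c j := fun j => by
    rw [hX0def, one_div, Real.rpow_inv_rpow (hcnn j) hp0]
  -- characterization of P
  have hP : ∀ j, P j ↔ X0 j ≤ 1 := by
    intro j
    have hle1 : X0 j ≤ 1 ↔ b ^ p + w - 1 ≤ w * a j ^ p := by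
      rw [← Real.rpow_le_rpow_iff (hX0nn j) zero_le_one hp, hX0p j, Real.one_rpow,
        hcdef]
      simp only []
      rw [div_le_one hw1']
      constructor <;> intro h <;> linarith
    rw [hle1]
    by_cases hcase : b ^ p < 1 - w
    · simp only [hPdef]
      have : w * a j ^ p ≥ 0 := mul_nonneg hw0.le (Real.rpow_nonneg (ha j).1 _)
      constructor <;> intro _
      · linarith
      · exact Or.inl hcase
    · have ht0 : (0:ℝ) ≤ (b ^ p + w - 1) / w := by
        push_neg at hcase
        exact div_nonneg (by linarith) hw0.le
      have : ((b ^ p + w - 1) / w) ^ (1 / p) ≤ a j ↔ b ^ p + w - 1 ≤ w * a j ^ p := by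
        rw [← Real.rpow_le_rpow_iff (Real.rpow_nonneg ht0 _) (ha j).1 hp,
          one_div, Real.rpow_inv_rpow ht0 hp0, div_le_iff₀ hw0, mul_comm]
      simp only [hPdef]
      tauto
  -- properties of Xbar
  have hXP : ∀ j, P j → Xbar j = X0 j := fun j hj => by
    rw [hXbar j, if_pos hj]
  have hXnP : ∀ j, ¬ P j → Xbar j = 1 := fun j hj => by
    rw [hXbar j, if_neg hj]
  have hXnn : ∀ j, 0 ≤ Xbar j := by
    intro j
    by_cases hj : P j
    · rw [hXP j hj]; exact hX0nn j
    · rw [hXnP j hj]; exact zero_le_one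
  have hXle1 : ∀ j, Xbar j ≤ 1 := by
    intro j
    by_cases hj : P j
    · rw [hXP j hj]; exact (hP j).mp hj
    · rw [hXnP j hj]
  have hXleX0 : ∀ j, Xbar j ≤ X0 j := by
    intro j
    by_cases hj : P j
    · rw [hXP j hj]
    · rw [hXnP j hj]
      have := (hP j).not.mp hj
      push_neg at this
      exact this.le
  -- phi characterizations
  have hinner : ∀ j t, 0 ≤ t → (0:ℝ) ≤ w * a j ^ p + (1 - w) * t ^ p := by
    intro j t ht
    have := Real.rpow_nonneg (ha j).1 p
    have := Real.rpow_nonneg ht p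
    positivity
  have hbp : b ^ p = (b ^ p) := rfl
  have hbrec : (b ^ p) ^ (1 / p) = b := by
    rw [one_div, Real.rpow_rpow_inv hb0 hp0]
  have hphi_le : ∀ j t, 0 ≤ t → (phi w p (a j) t ≤ b ↔ t ^ p ≤ c j) := by
    intro j t ht
    have h2 : phi w p (a j) t ≤ b ↔ w * a j ^ p + (1 - w) * t ^ p ≤ b ^ p := by
      rw [phi, ← hbrec, Real.rpow_le_rpow_iff (hinner j t ht) (Real.rpow_nonneg hb0 _) hip,
        hbrec]
    rw [h2, hcdef]
    rw [le_div_iff₀ hw1', mul_comm]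
    constructor <;> intro h <;> linarith
  have hphi_eq : ∀ j t, 0 ≤ t → (phi w p (a j) t = b ↔ t = X0 j) := by
    intro j t ht
    constructor
    · intro h
      have h2 : w * a j ^ p + (1 - w) * t ^ p = b ^ p := by
        have := congrArg (fun s : ℝ => s ^ p) h
        simpa only [phi, one_div, Real.rpow_inv_rpow (hinner j t ht) hp0] using this
      have h3 : t ^ p = c j := by
        rw [hcdef]; field_simp; linarith
      calc t = (t ^ p) ^ (1/p) := by rw [one_div, Real.rpow_rpow_inv ht hp0]
        _ = X0 j := by rw [h3, hX0def]
    · intro h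
      have h3 : t ^ p = c j := by rw [h, hX0p]
      have h2 : w * a j ^ p + (1 - w) * t ^ p = b ^ p := by
        rw [h3, hcdef]; field_simp; ring
      rw [phi, h2, hbrec]
  -- coordinate characterization
  have hcoord : ∀ j t, 0 ≤ t → ((t ≤ 1 ∧ phi w p (a j) t ≤ b) ↔ t ≤ Xbar j) := by
    intro j t ht
    have hX0iff : t ≤ X0 j ↔ t ^ p ≤ c j := by
      rw [← hX0p j, Real.rpow_le_rpow_iff ht (hX0nn j) hp]
    constructor
    · rintro ⟨ht1, hphi⟩
      have htX0 : t ≤ X0 j := hX0iff.mpr ((hphi_le j t ht).mp hphi)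
      by_cases hj : P j
      · rw [hXP j hj]; exact htX0
      · rw [hXnP j hj]; exact ht1
    · intro h
      refine ⟨h.trans (hXle1 j), (hphi_le j t ht).mpr (hX0iff.mp (h.trans (hXleX0 j)))⟩
  -- main equality
  ext x
  simp only [hS, Set.mem_setOf_eq, Set.mem_iUnion, Set.mem_Icc, Set.mem_Icc,
    exists_prop]
  constructor
  · rintro ⟨hx, hsup⟩
    have hle : ∀ j, phi w p (a j) (x j) ≤ b := by
      intro j
      rw [← hsup]
      exact Finset.le_sup' (f := fun j => phi w p (a j) (x j)) (Finset.mem_univ j)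
    obtain ⟨j₀, _, hj₀⟩ := (Finset.le_sup'_iff _).mp hsup.ge
    have heq : phi w p (a j₀) (x j₀) = b := le_antisymm (hle j₀) hj₀
    have hx0 : x j₀ = X0 j₀ := (hphi_eq j₀ (x j₀) (hx j₀).1).mp heq
    have hPj₀ : P j₀ := (hP j₀).mpr (hx0 ▸ (hx j₀).2)
    refine ⟨j₀, hPj₀, ?_, ?_⟩
    · intro k
      by_cases hk : k = j₀
      · subst hk
        rw [hXP k hPj₀, hx0] at *
        simp
      · simp only [if_neg hk]
        exact (hx k).1
    · intro k
      exact (hcoord k (x k) (hx k).1).mp ⟨(hx k).2, hle k⟩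
  · rintro ⟨j₀, hPj₀, hlo, hhi⟩
    have hxnn : ∀ k, 0 ≤ x k := by
      intro k
      by_cases hk : k = j₀
      · subst hk
        have h := hlo k
        simp only [if_pos] at h
        exact (hXnn k).trans h
      · have := hlo k
        simp only [if_neg hk] at this
        exact this
    have hxj₀ : x j₀ = Xbar j₀ := by
      have h := hlo j₀
      simp only [if_pos] at h
      exact le_antisymm (hhi j₀) h
    refine ⟨fun k => ⟨hxnn k, ((hcoord k (x k) (hxnn k)).mpr (hhi k)).1⟩, ?_⟩
    apply le_antisymm
    · rw [Finset.sup'_le_iff]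
      intro k _
      exact ((hcoord k (x k) (hxnn k)).mpr (hhi k)).2
    · rw [Finset.le_sup'_iff]
      refine ⟨j₀, Finset.mem_univ j₀, ?_⟩
      have : phi w p (a j₀) (x j₀) = b := by
        rw [hphi_eq j₀ (x j₀) (hxnn j₀), hxj₀, hXP j₀ hPj₀]
      exact this.ge
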